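/- arXiv:2402.14996 — 11 statements merged into one kernel-verified Lean document; each statement's English description precedes it below -/
import Mathlib

section
/- If a, b, α, β are positive real numbers with max{a,b} ≥ max{α,β} and a² + b² > α² + β², then for all p > 2 it holds that a^p + b^p > α^p + β^p. -/
lemma aux_deriv (r t y : ℝ) (hr : 1 ≤ r) :
    HasDerivAt (fun y : ℝ => (y + t) ^ r - y ^ r)
      ((r * (y + t) ^ (r - 1)) * 1 - r * y ^ (r - 1)) y :=
  ((Real.hasDerivAt_rpow_const (Or.inr hr)).comp y
    ((hasDerivAt_id y).add_const t)).sub (Real.hasDerivAt_rpow_const (Or.inr hr))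

lemma aux_mono (r t : ℝ) (hr : 1 ≤ r) (ht : 0 ≤ t) :
    MonotoneOn (fun y : ℝ => (y + t) ^ r - y ^ r) (Set.Ici 0) := by
  apply monotoneOn_of_deriv_nonneg (convex_Ici 0)
  · apply Continuous.continuousOn
    exact ((Real.continuous_rpow_const (by linarith)).comp
      (continuous_id.add continuous_const)).sub
      (Real.continuous_rpow_const (by linarith))
  · intro y hy
    exact (aux_deriv r t y hr).differentiableAt.differentiableWithinAt
  · intro y hy
    have hy0 : (0:ℝ) ≤ y := le_of_lt (by simpa using hy)
    rw [(aux_deriv r t y hr).deriv]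
    have : y ^ (r-1) ≤ (y + t) ^ (r-1) :=
      Real.rpow_le_rpow hy0 (by linarith) (by linarith)
    nlinarith

lemma aux (r t x y : ℝ) (hr : 1 ≤ r) (ht : 0 ≤ t) (hx : 0 ≤ x) (hxy : x ≤ y) :
    (x + t) ^ r - x ^ r ≤ (y + t) ^ r - y ^ r :=
  aux_mono r t hr ht hx (le_trans hx hxy) hxy

lemma key2 (u v w z r : ℝ) (hv : 0 < v) (hz : 0 < z) (hvu : v ≤ u) (hzw : z ≤ w)
    (huw : u ≤ w) (hsum : u + v < w + z) (hr : 1 < r) : u ^ r + v ^ r < w ^ r + z ^ r := by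
  have hu : 0 < u := lt_of_lt_of_le hv hvu
  have hw : 0 < w := lt_of_lt_of_le hu huw
  rcases le_or_gt (u + v) w with h | h
  · have h1 : (0 + v) ^ r - (0:ℝ) ^ r ≤ (u + v) ^ r - u ^ r :=
      aux r v 0 u hr.le hv.le le_rfl hu.le
    rw [Real.zero_rpow (by linarith), zero_add, sub_zero] at h1
    have h2 : (u + v) ^ r ≤ w ^ r :=
      Real.rpow_le_rpow (by positivity) h (by linarith)
    have h3 : 0 < z ^ r := Real.rpow_pos_of_pos hz r
    linarith
  · set x := u + v - w with hxdef
    have hx0 : 0 ≤ x := by simp [hxdef]; linarith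
    have hxz : x < z := by simp [hxdef]; linarith
    have hxu : x ≤ u := by simp [hxdef]; linarith
    have haux : (x + (w - u)) ^ r - x ^ r ≤ (u + (w - u)) ^ r - u ^ r :=
      aux r (w - u) x u hr.le (by linarith) hx0 hxu
    have h1 : x ^ r < z ^ r := Real.rpow_lt_rpow hx0 hxz (by linarith)
    have e1 : x + (w - u) = v := by simp [hxdef]
    have e2 : u + (w - u) = w := by ring
    rw [e1, e2] at haux
    linarith

lemma key3 (a b α β p : ℝ) (ha : 0 < a) (hb : 0 < b) (hα : 0 < α) (hβ : 0 < β)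
    (hba : b ≤ a) (hβα : β ≤ α) (hαa : α ≤ a)
    (hsq : α ^ (2:ℝ) + β ^ (2:ℝ) < a ^ (2:ℝ) + b ^ (2:ℝ)) (hp : 2 < p) :
    α ^ p + β ^ p < a ^ p + b ^ p := by
  have key := key2 (α ^ (2:ℝ)) (β ^ (2:ℝ)) (a ^ (2:ℝ)) (b ^ (2:ℝ)) (p / 2)
    (Real.rpow_pos_of_pos hβ 2) (Real.rpow_pos_of_pos hb 2)
    (Real.rpow_le_rpow hβ.le hβα (by norm_num))
    (Real.rpow_le_rpow hb.le hba (by norm_num))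
    (Real.rpow_le_rpow hα.le hαa (by norm_num))
    hsq (by linarith)
  have e : ∀ x : ℝ, 0 < x → (x ^ (2:ℝ)) ^ (p/2) = x ^ p := by
    intro x hx
    rw [← Real.rpow_mul hx.le]
    congr 1
    ring
  rwa [e α hα, e β hβ, e a ha, e b hb] at key

theorem stmt_0 (a b α β p : ℝ) (ha : 0 < a) (hb : 0 < b) (hα : 0 < α) (hβ : 0 < β)
    (hmax : max α β ≤ max a b) (hsq : α ^ (2:ℝ) + β ^ (2:ℝ) < a ^ (2:ℝ) + b ^ (2:ℝ))
    (hp : 2 < p) :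
    α ^ p + β ^ p < a ^ p + b ^ p := by
  rcases le_total b a with hab | hab <;> rcases le_total β α with hαβ | hαβ <;>
    [skip; skip; skip; skip]
  · exact key3 a b α β p ha hb hα hβ hab hαβ
      (by rwa [max_eq_left hαβ, max_eq_left hab] at hmax) hsq hp
  · have := key3 a b β α p ha hb hβ hα hab hαβ
      (by rwa [max_eq_right hαβ, max_eq_left hab] at hmax) (by linarith) hp
    linarith
  · have := key3 b a α β p hb ha hα hβ hab hαβ
      (by rwa [max_eq_left hαβ, max_eq_right hab] at hmax) (by linarith) hp
    linarith
  · have := key3 b a β α p hb ha hβ hα hab hαβ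
      (by rwa [max_eq_right hαβ, max_eq_right hab] at hmax) (by linarith) hp
    linarith
end

section
/- For real numbers u, v ≥ 1, the function f(p) = (u^p + v^p - 1)^(1/p) is non-increasing on [2, ∞). -/
open Set

lemma key_deriv (y s t : ℝ) (hy : 0 ≤ y) (ht : 0 < t) :
    HasDerivAt (fun t : ℝ => (t + y) ^ s - t ^ s)
      (s * (t + y) ^ (s - 1) * 1 - s * t ^ (s - 1)) t := by
  have h1 : HasDerivAt (fun t : ℝ => (t + y) ^ s) (s * (t + y) ^ (s - 1) * 1) t :=
    by have hd := Real.hasDerivAt_rpow_const (x := t + y) (p := s)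
         (Or.inl (ne_of_gt (by linarith)))
       exact hd.comp t ((hasDerivAt_id' t).add_const y)
  have h2 : HasDerivAt (fun t : ℝ => t ^ s) (s * t ^ (s - 1)) t :=
    Real.hasDerivAt_rpow_const (Or.inl (ne_of_gt ht))
  exact h1.sub h2

lemma key_mono (y s : ℝ) (hy : 0 ≤ y) (hs : 1 ≤ s) :
    MonotoneOn (fun t : ℝ => (t + y) ^ s - t ^ s) (Set.Ici (0:ℝ)) := by
  apply monotoneOn_of_deriv_nonneg (convex_Ici 0)
  · apply ContinuousOn.sub
    · apply ContinuousOn.rpow_const (by fun_prop)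
      intro x hx; right; linarith
    · apply ContinuousOn.rpow_const continuousOn_id
      intro x hx; right; linarith
  · intro t ht
    simp only [interior_Ici, mem_Ioi] at ht
    exact (key_deriv y s t hy ht).differentiableAt.differentiableWithinAt
  · intro t ht
    simp only [interior_Ici, mem_Ioi] at ht
    rw [(key_deriv y s t hy ht).deriv]
    have : t ^ (s-1) ≤ (t + y) ^ (s-1) :=
      Real.rpow_le_rpow (le_of_lt ht) (by linarith) (by linarith)
    nlinarith

lemma key_ineq (a b s : ℝ) (ha : 1 ≤ a) (hb : 1 ≤ b) (hs : 1 ≤ s) :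
    a ^ s + b ^ s - 1 ≤ (a + b - 1) ^ s := by
  have := key_mono (b - 1) s (by linarith) hs (mem_Ici.2 (by norm_num : (0:ℝ) ≤ 1))
    (mem_Ici.2 (by linarith : (0:ℝ) ≤ a)) ha
  simp only at this
  rw [Real.one_rpow] at this
  have e : (1 : ℝ) + (b - 1) = b := by ring
  rw [e] at this
  have e2 : a + (b - 1) = a + b - 1 := by ring
  rw [e2] at this
  linarith

theorem stmt_3 (u v : ℝ) (hu : 1 ≤ u) (hv : 1 ≤ v) :
    AntitoneOn (fun p : ℝ => (u ^ p + v ^ p - 1) ^ (1 / p)) (Set.Ici (2 : ℝ)) := by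
  intro p hp q hq hpq
  simp only [mem_Ici] at hp hq
  have hp0 : 0 < p := by linarith
  have hq0 : 0 < q := by linarith
  have hup : 1 ≤ u ^ p := Real.one_le_rpow hu hp0.le
  have hvp : 1 ≤ v ^ p := Real.one_le_rpow hv hp0.le
  have hs : 1 ≤ q / p := (one_le_div hp0).2 hpq
  have hA : (0:ℝ) ≤ u ^ p + v ^ p - 1 := by linarith
  have hmain : u ^ q + v ^ q - 1 ≤ (u ^ p + v ^ p - 1) ^ (q / p) := by
    have hu' : (u ^ p) ^ (q / p) = u ^ q := by
      rw [← Real.rpow_mul (by linarith : (0:ℝ) ≤ u)]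
      congr 1; field_simp
    have hv' : (v ^ p) ^ (q / p) = v ^ q := by
      rw [← Real.rpow_mul (by linarith : (0:ℝ) ≤ v)]
      congr 1; field_simp
    have := key_ineq (u ^ p) (v ^ p) (q / p) hup hvp hs
    rw [hu', hv'] at this
    exact this
  calc (u ^ q + v ^ q - 1) ^ (1 / q)
      ≤ ((u ^ p + v ^ p - 1) ^ (q / p)) ^ (1 / q) := by
        apply Real.rpow_le_rpow _ hmain (by positivity)
        have : 1 ≤ u ^ q := Real.one_le_rpow hu hq0.le
        have : 1 ≤ v ^ q := Real.one_le_rpow hv hq0.le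
        linarith
    _ = (u ^ p + v ^ p - 1) ^ (1 / p) := by
        rw [← Real.rpow_mul hA]
        congr 1
        field_simp
end

section
/- For real numbers u, v ≥ 1 and p ≥ 0, it holds that p·(u^p · ln u + v^p · ln v) ≤ (u^p + v^p - 1) · ln(u^p + v^p - 1). -/
lemma chord_bound (s x : ℝ) (hs : 1 < s) (hx1 : 1 ≤ x) (hxs : x ≤ s) :
    x * Real.log x ≤ (x - 1) / (s - 1) * (s * Real.log s) := by
  have hd : (0:ℝ) < s - 1 := by linarith
  have hconv := Real.convexOn_mul_log.2
  have h1 := hconv (Set.mem_Ici.2 (by norm_num : (0:ℝ) ≤ 1))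
    (Set.mem_Ici.2 (by linarith : (0:ℝ) ≤ s))
    (a := (s - x) / (s - 1)) (b := (x - 1) / (s - 1))
    (div_nonneg (by linarith) hd.le) (div_nonneg (by linarith) hd.le)
    (by field_simp; ring)
  have hx : (s - x) / (s - 1) + (x - 1) / (s - 1) * s = x := by
    field_simp
    ring
  simp only [smul_eq_mul, mul_one, hx, Real.log_one, mul_zero, zero_add] at h1
  exact h1

lemma key_mul_log (a b : ℝ) (ha : 1 ≤ a) (hb : 1 ≤ b) :
    a * Real.log a + b * Real.log b ≤ (a + b - 1) * Real.log (a + b - 1) := by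
  rcases eq_or_lt_of_le (by linarith : (1:ℝ) ≤ a + b - 1) with h | h
  · have ha1 : a = 1 := by linarith
    have hb1 : b = 1 := by linarith
    norm_num [ha1, hb1]
  · have hA := chord_bound (a + b - 1) a h ha (by linarith)
    have hB := chord_bound (a + b - 1) b h hb (by linarith)
    have hd : (0:ℝ) < a + b - 1 - 1 := by linarith
    have hsum : (a - 1) / (a + b - 1 - 1) * ((a + b - 1) * Real.log (a + b - 1))
        + (b - 1) / (a + b - 1 - 1) * ((a + b - 1) * Real.log (a + b - 1))
        = (a + b - 1) * Real.log (a + b - 1) := by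
      field_simp
      ring
    linarith

theorem stmt_4 (u v p : ℝ) (hu : 1 ≤ u) (hv : 1 ≤ v) (hp : 0 ≤ p) :
    p * (u ^ p * Real.log u + v ^ p * Real.log v) ≤
      (u ^ p + v ^ p - 1) * Real.log (u ^ p + v ^ p - 1) := by
  have hu0 : (0:ℝ) < u := lt_of_lt_of_le one_pos hu
  have hv0 : (0:ℝ) < v := lt_of_lt_of_le one_pos hv
  have ha : 1 ≤ u ^ p := Real.one_le_rpow hu hp
  have hb : 1 ≤ v ^ p := Real.one_le_rpow hv hp
  have h1 : Real.log (u ^ p) = p * Real.log u := Real.log_rpow hu0 p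
  have h2 : Real.log (v ^ p) = p * Real.log v := Real.log_rpow hv0 p
  have := key_mul_log (u ^ p) (v ^ p) ha hb
  rw [h1, h2] at this
  linarith
end

section
/- Fix p ≥ 1 and n ≥ 1. Let c : Fin n → Fin m → ℝ≥0 be additive costs with total cost C_i = Σ_j c i j > 0 for every agent i, and normalized costs c̃_{ij} = c_{ij}/C_i. If a fractional allocation x* : Fin n → Fin m → [0,1] with Σ_i x*_{ij} = 1 for all j minimizes Σ_i (Σ_j x_{ij}·c̃_{ij})^p over all fractional allocations x, then for every agent i, Σ_j x*_{ij}·c_{ij} ≤ n^{1/p} · C_i / n. -/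
/-- A fractional allocation of `m` divisible chores among `n` agents. -/
def IsFracAlloc {n m : ℕ} (x : Fin n → Fin m → ℝ) : Prop :=
  (∀ i j, 0 ≤ x i j ∧ x i j ≤ 1) ∧ ∀ j, ∑ i, x i j = 1

theorem stmt_5 (p : ℝ) (hp : 1 ≤ p) (n m : ℕ) (hn : 1 ≤ n)
    (c : Fin n → Fin m → ℝ) (hc : ∀ i j, 0 ≤ c i j)
    (hC : ∀ i, 0 < ∑ j, c i j)
    (x : Fin n → Fin m → ℝ) (hx : IsFracAlloc x)
    (hmin : ∀ y : Fin n → Fin m → ℝ, IsFracAlloc y →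
      ∑ i, (∑ j, x i j * (c i j / ∑ k, c i k)) ^ p ≤
        ∑ i, (∑ j, y i j * (c i j / ∑ k, c i k)) ^ p)
    (i : Fin n) :
    ∑ j, x i j * c i j ≤ (n : ℝ) ^ (1 / p) * (∑ j, c i j) / n := by
  have hp0 : 0 < p := lt_of_lt_of_le one_pos hp
  have hn0 : (0:ℝ) < n := by exact_mod_cast hn
  set s : Fin n → ℝ := fun i => ∑ j, x i j * (c i j / ∑ k, c i k) with hs
  have hs0 : ∀ a, 0 ≤ s a := fun a =>
    Finset.sum_nonneg fun j _ => mul_nonneg (hx.1 a j).1 (div_nonneg (hc a j) (hC a).le)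
  -- uniform allocation
  have huy : IsFracAlloc (fun (_ : Fin n) (_ : Fin m) => (n:ℝ)⁻¹) := by
    constructor
    · intro a j
      constructor
      · positivity
      · rw [inv_le_one_iff₀]
        right; exact_mod_cast hn
    · intro j
      simp [Finset.sum_const, mul_inv_cancel₀ hn0.ne']
  have hkey : ∑ a, (s a) ^ p ≤ (n:ℝ) * ((n:ℝ)⁻¹) ^ p := by
    have := hmin _ huy
    have heq : ∀ a : Fin n, (∑ j, (n:ℝ)⁻¹ * (c a j / ∑ k, c a k)) = (n:ℝ)⁻¹ := by
      intro a
      rw [← Finset.mul_sum, ← Finset.sum_div, div_self (hC a).ne']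
      ring
    calc ∑ a, (s a) ^ p ≤ ∑ a : Fin n, (∑ j, (n:ℝ)⁻¹ * (c a j / ∑ k, c a k)) ^ p := this
      _ = ∑ a : Fin n, ((n:ℝ)⁻¹) ^ p := by simp_rw [heq]
      _ = (n:ℝ) * ((n:ℝ)⁻¹) ^ p := by
          rw [Finset.sum_const]; simp [mul_comm]
  have hsi : (s i) ^ p ≤ (n:ℝ) * ((n:ℝ)⁻¹) ^ p := by
    refine le_trans ?_ hkey
    exact Finset.single_le_sum (fun a _ => Real.rpow_nonneg (hs0 a) p) (Finset.mem_univ i)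
  have hsle : s i ≤ (n:ℝ) ^ (1/p) * (n:ℝ)⁻¹ := by
    have hpp : p * (1/p) = 1 := by field_simp
    have h1 : s i = ((s i) ^ p) ^ (1/p) := by
      rw [← Real.rpow_mul (hs0 i), hpp, Real.rpow_one]
    have h2 : (((n:ℝ)⁻¹) ^ p) ^ (1/p) = (n:ℝ)⁻¹ := by
      rw [← Real.rpow_mul (by positivity), hpp, Real.rpow_one]
    calc s i = ((s i) ^ p) ^ (1/p) := h1
      _ ≤ ((n:ℝ) * ((n:ℝ)⁻¹) ^ p) ^ (1/p) :=
          Real.rpow_le_rpow (Real.rpow_nonneg (hs0 i) p) hsi (by positivity)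
      _ = (n:ℝ) ^ (1/p) * (n:ℝ)⁻¹ := by
          rw [Real.mul_rpow hn0.le (Real.rpow_nonneg (by positivity) p), h2]
  have hsum : s i = (∑ j, x i j * c i j) / (∑ j, c i j) := by
    rw [Finset.sum_div]
    exact Finset.sum_congr rfl fun j _ => by ring
  rw [hsum] at hsle
  rw [div_le_iff₀ (hC i)] at hsle
  calc ∑ j, x i j * c i j ≤ (n:ℝ) ^ (1/p) * (n:ℝ)⁻¹ * (∑ j, c i j) := hsle
    _ = (n : ℝ) ^ (1 / p) * (∑ j, c i j) / n := by ring
end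

section
/- There is no weakly-increasing function 𝒞 : ℝ² → ℝ (meaning 𝒞(x) > 𝒞(y) whenever x₁ > y₁ and x₂ > y₂) such that for every divisible-chore instance with 2 agents with additive costs, some allocation minimizing 𝒞(c₁(x₁), c₂(x₂)) is β-EF, for any fixed β ≥ 1. -/
theorem stmt_7 (β : ℝ) (hβ : 1 ≤ β) :
    ¬ ∃ C : ℝ → ℝ → ℝ,
      (∀ x1 x2 y1 y2 : ℝ, y1 < x1 → y2 < x2 → C y1 y2 < C x1 x2) ∧
      (∀ (m : ℕ) (c : Fin 2 → Fin m → ℝ), (∀ i j, 0 ≤ c i j) →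
        ∃ x : Fin 2 → Fin m → ℝ,
          (∀ i j, 0 ≤ x i j) ∧ (∀ j, x 0 j + x 1 j = 1) ∧
          (∀ y : Fin 2 → Fin m → ℝ, (∀ i j, 0 ≤ y i j) → (∀ j, y 0 j + y 1 j = 1) →
            C (∑ j, x 0 j * c 0 j) (∑ j, x 1 j * c 1 j) ≤
              C (∑ j, y 0 j * c 0 j) (∑ j, y 1 j * c 1 j)) ∧
          (∑ j, x 0 j * c 0 j ≤ β * ∑ j, x 1 j * c 0 j) ∧
          (∑ j, x 1 j * c 1 j ≤ β * ∑ j, x 0 j * c 1 j)) := by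
  rintro ⟨C, hmono, hrule⟩
  set N : ℝ := β + 2 with hNdef
  have hNpos : (0:ℝ) < N := by simp [hNdef]; linarith
  -- Instance I : one chore, costs (N, 1)
  obtain ⟨x, hx0, hxsum, hxmin, hxef0, hxef1⟩ :=
    hrule 1 ![![N], ![1]] (by
      intro i j
      fin_cases i <;> fin_cases j <;> simp <;> linarith)
  -- Instance I' : one chore, costs (1, N)
  obtain ⟨y, hy0, hysum, hymin, hyef0, hyef1⟩ :=
    hrule 1 ![![1], ![N]] (by
      intro i j
      fin_cases i <;> fin_cases j <;> simp <;> linarith)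
  simp only [Fin.sum_univ_one, Matrix.cons_val_zero, Matrix.cons_val_one,
    Matrix.head_cons, mul_one] at hxmin hxef0 hxef1 hymin hyef0 hyef1
  set t := x 0 0 with htdef
  set s := y 0 0 with hsdef
  have hxt : x 1 0 = 1 - t := by have := hxsum 0; linarith
  have hys : y 1 0 = 1 - s := by have := hysum 0; linarith
  rw [hxt] at hxmin hxef0 hxef1
  rw [hys] at hymin hyef0 hyef1
  -- envy-freeness constraints
  have ht1 : (1:ℝ) ≤ t * (1 + β) := by nlinarith [hxef1]
  have ht2 : (1:ℝ) ≤ (1 - t) * (1 + β) := by nlinarith [hxef0, hNpos]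
  have hs1 : (1:ℝ) ≤ s * (1 + β) := by nlinarith [hyef1, hNpos]
  have hs2 : (1:ℝ) ≤ (1 - s) * (1 + β) := by nlinarith [hyef0]
  have hβ0 : (0:ℝ) < 1 + β := by linarith
  have htpos : 0 < t := by nlinarith
  have ht1' : 0 < 1 - t := by nlinarith
  have hspos : 0 < s := by nlinarith
  have hs1' : 0 < 1 - s := by nlinarith
  -- strict comparisons
  have h1tN : (1:ℝ) < t * N := by nlinarith
  have h1sN : (1:ℝ) < (1 - s) * N := by nlinarith
  -- minimality vs corner allocations
  have hA : C (t * N) (1 - t) ≤ C 0 1 := by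
    have h := hxmin ![![0], ![1]]
      (by intro i j; fin_cases i <;> fin_cases j <;> simp)
      (by intro j; fin_cases j <;> simp)
    simpa using h
  have hD : C s ((1 - s) * N) ≤ C 1 0 := by
    have h := hymin ![![1], ![0]]
      (by intro i j; fin_cases i <;> fin_cases j <;> simp)
      (by intro j; fin_cases j <;> simp)
    simpa using h
  have hB : C 0 1 < C s ((1 - s) * N) := hmono _ _ _ _ hspos h1sN
  have hE : C 1 0 < C (t * N) (1 - t) := hmono _ _ _ _ h1tN ht1'
  have : C (t * N) (1 - t) < C (t * N) (1 - t) :=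
    lt_of_le_of_lt (le_trans (le_trans hA hB.le) hD) hE
  exact lt_irrefl _ this
end

section
/- In the 2-agent instance with m = 2β+2 divisible chores (β ≥ 1 an integer), where agent 1 has cost 1 for every chore and agent 2 has cost 1 for chore 1 and cost m for every other chore, every β-EF allocation (x₁, x₂) satisfies c₁(x₁) ≥ 1.5 and c₂(x₂) ≥ m + 1. -/
theorem stmt_8 (β : ℕ) (hβ : 1 ≤ β) (m : ℕ) (hm : m = 2 * β + 2)
    (x : Fin 2 → Fin m → ℝ) (hxnn : ∀ i j, 0 ≤ x i j) (hxsum : ∀ j, x 0 j + x 1 j = 1)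
    (hEF1 : ∑ j, x 0 j * (1 : ℝ) ≤
      (β : ℝ) * ∑ j, x 1 j * (1 : ℝ))
    (hEF2 : ∑ j, x 1 j * (if (j : ℕ) = 0 then (1 : ℝ) else (m : ℝ)) ≤
      (β : ℝ) * ∑ j, x 0 j * (if (j : ℕ) = 0 then (1 : ℝ) else (m : ℝ))) :
    (3 / 2 : ℝ) ≤ ∑ j, x 0 j * (1 : ℝ) ∧
      (m : ℝ) + 1 ≤ ∑ j, x 1 j * (if (j : ℕ) = 0 then (1 : ℝ) else (m : ℝ)) := by
  have hm4 : 4 ≤ m := by omega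
  have hm0 : 0 < m := by omega
  set j0 : Fin m := ⟨0, hm0⟩ with hj0
  have key : ∀ i, ∑ j, x i j * (if (j : ℕ) = 0 then (1 : ℝ) else (m : ℝ)) =
      (m : ℝ) * (∑ j, x i j) - ((m : ℝ) - 1) * x i j0 := by
    intro i
    have h1 : ∀ j : Fin m, x i j * (if (j : ℕ) = 0 then (1 : ℝ) else (m : ℝ)) =
        x i j * (m : ℝ) - (if j = j0 then ((m : ℝ) - 1) * x i j else 0) := by
      intro j
      by_cases h : (j : ℕ) = 0
      · have : j = j0 := by ext; simpa using h
        simp [this, hj0]; ring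
      · have : j ≠ j0 := by
          intro hc; apply h; rw [hc]
        simp [h, this]
    rw [Finset.sum_congr rfl (fun j _ => h1 j), Finset.sum_sub_distrib,
      Finset.sum_ite_eq' Finset.univ j0 (fun j => ((m : ℝ) - 1) * x i j)]
    simp only [Finset.mem_univ, if_true, ← Finset.sum_mul]
    ring
  have hST : (∑ j, x 0 j) + (∑ j, x 1 j) = (m : ℝ) := by
    rw [← Finset.sum_add_distrib]
    simp [hxsum]
  have ha0 : 0 ≤ x 1 j0 := hxnn 1 j0
  have ha1 : x 1 j0 ≤ 1 := by
    have := hxsum j0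
    have := hxnn 0 j0
    linarith
  have hk0 := key 0
  have hk1 := key 1
  rw [hk1, hk0] at hEF2
  simp only [mul_one] at hEF1 ⊢
  rw [hk1]
  have hB : (1 : ℝ) ≤ (β : ℝ) := by exact_mod_cast hβ
  have hM : (m : ℝ) = 2 * (β : ℝ) + 2 := by rw [hm]; push_cast; ring
  have hab := hxsum j0
  have hb0 : 0 ≤ x 0 j0 := hxnn 0 j0
  rw [hM] at hEF2 hST ⊢
  constructor
  · nlinarith [sq_nonneg (β : ℝ), sq_nonneg ((β : ℝ) + 1),
      mul_nonneg (by positivity : (0:ℝ) ≤ (β : ℝ) * (2 * (β : ℝ) + 1)) hb0,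
      mul_nonneg (by positivity : (0:ℝ) ≤ 2 * (β : ℝ) + 1) (by linarith : (0:ℝ) ≤ 1 - x 1 j0)]
  · have hTnn : (0:ℝ) ≤ ∑ j, x 1 j := Finset.sum_nonneg fun j _ => hxnn 1 j
    have hT2 : (2 : ℝ) ≤ ∑ j, x 1 j := by
      nlinarith [mul_nonneg (by positivity : (0:ℝ) ≤ (β : ℝ)) hTnn]
    nlinarith [mul_nonneg (by positivity : (0:ℝ) ≤ 2 * (β : ℝ) + 2)
      (by linarith : (0:ℝ) ≤ (∑ j, x 1 j) - 2)]
end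

section
/- Fix p > 1 and an integer n > p. In the divisible-chore instance with n agents and 2 chores where agent 1 has normalized costs c̃₁₁ = 1 - ((p-1)/(n-1))^((p-1)/p) and c̃₁₂ = ((p-1)/(n-1))^((p-1)/p), and each other agent j has c̃_{j1} = 0, c̃_{j2} = 1: in any allocation minimizing Σ_i c̃_i(x_i)^p, agent 1 receives exactly a 1/p fraction of chore 2, and agent 1's normalized cost equals (1/p)·((p-1)/(n-1))^((p-1)/p). -/
open Real Finset

/-- Tangent line inequality for `t ^ p`, `p > 1`, strict version. -/
lemma rpow_tangent_lt {p s t : ℝ} (hp : 1 < p) (hs : 0 ≤ s) (ht : 0 ≤ t) (hts : t ≠ s) :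
    s ^ p + p * s ^ (p - 1) * (t - s) < t ^ p := by
  rcases eq_or_lt_of_le hs with rfl | hs
  · have ht' : 0 < t := lt_of_le_of_ne ht (Ne.symm hts)
    have h1 : (0:ℝ) ^ p = 0 := Real.zero_rpow (by positivity)
    have h2 : (0:ℝ) ^ (p - 1) = 0 := Real.zero_rpow (by linarith)
    rw [h1, h2]
    simpa using Real.rpow_pos_of_pos ht' p
  · have hu : -1 ≤ t / s - 1 := by
      have : 0 ≤ t / s := div_nonneg ht hs.le
      linarith
    have hu' : t / s - 1 ≠ 0 := by
      intro h
      apply hts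
      field_simp at h
      linarith
    have hb := one_add_mul_self_lt_rpow_one_add hu hu' hp
    rw [show 1 + (t / s - 1) = t / s by ring, Real.div_rpow ht hs.le] at hb
    have hsp : 0 < s ^ p := Real.rpow_pos_of_pos hs p
    have := mul_lt_mul_of_pos_right hb hsp
    rw [div_mul_cancel₀ _ hsp.ne'] at this
    calc s ^ p + p * s ^ (p - 1) * (t - s)
        = (1 + p * (t / s - 1)) * s ^ p := by
          have h1 : s ^ (p - 1) * s = s ^ p := by
            nth_rewrite 2 [← Real.rpow_one s]
            rw [← Real.rpow_add hs]
            ring_nf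
          have h2 : s ^ (p-1) = s ^ p / s := by
            rw [eq_div_iff hs.ne']; exact h1
          rw [h2]
          field_simp [h2]
      _ < t ^ p := this

lemma rpow_tangent_le {p s t : ℝ} (hp : 1 < p) (hs : 0 ≤ s) (ht : 0 ≤ t) :
    s ^ p + p * s ^ (p - 1) * (t - s) ≤ t ^ p := by
  rcases eq_or_ne t s with rfl | h
  · simp
  · exact (rpow_tangent_lt hp hs ht h).le

set_option maxHeartbeats 1000000 in
theorem stmt_10 (p : ℝ) (hp : 1 < p) (n : ℕ) (hn : 0 < n) (hnp : p < n)
    (c : Fin n → Fin 2 → ℝ)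
    (hc00 : c ⟨0, hn⟩ 0 = 1 - ((p - 1) / ((n : ℝ) - 1)) ^ ((p - 1) / p))
    (hc01 : c ⟨0, hn⟩ 1 = ((p - 1) / ((n : ℝ) - 1)) ^ ((p - 1) / p))
    (hcj : ∀ i : Fin n, i ≠ ⟨0, hn⟩ → c i 0 = 0 ∧ c i 1 = 1)
    (x : Fin n → Fin 2 → ℝ) (hx : IsFracAlloc x)
    (hmin : ∀ y : Fin n → Fin 2 → ℝ, IsFracAlloc y →
      ∑ i, (∑ j, x i j * c i j) ^ p ≤ ∑ i, (∑ j, y i j * c i j) ^ p) :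
    x ⟨0, hn⟩ 1 = 1 / p ∧
      ∑ j, x ⟨0, hn⟩ j * c ⟨0, hn⟩ j =
        (1 / p) * ((p - 1) / ((n : ℝ) - 1)) ^ ((p - 1) / p) := by
  have hp0 : (0:ℝ) < p := by linarith
  set i₀ : Fin n := ⟨0, hn⟩ with hi₀
  -- basic numeric facts
  have hn2 : (1:ℝ) < (n:ℝ) := by linarith
  have hm : (0:ℝ) < (n:ℝ) - 1 := by linarith
  have hm1 : (1:ℝ) ≤ (n:ℝ) - 1 := by
    have h1 : 1 < n := by exact_mod_cast hn2
    have h2 : (2:ℕ) ≤ n := h1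
    have h3 : ((2:ℕ):ℝ) ≤ (n:ℝ) := Nat.cast_le.mpr h2
    push_cast at h3
    linarith
  set r : ℝ := (p - 1) / ((n : ℝ) - 1) with hrdef
  have hr : 0 < r := div_pos (by linarith) hm
  have hr1 : r < 1 := (div_lt_one hm).mpr (by linarith)
  set a : ℝ := r ^ ((p - 1) / p) with hadef
  have ha : 0 < a := Real.rpow_pos_of_pos hr _
  have ha1 : a < 1 := Real.rpow_lt_one hr.le hr1 (div_pos (by linarith) hp0)
  set s : ℝ := (p - 1) / (p * ((n:ℝ) - 1)) with hsdef
  have hs0 : 0 < s := div_pos (by linarith) (by positivity)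
  -- key identity a ^ p = r ^ (p - 1)
  have hap : a ^ p = r ^ (p - 1) := by
    rw [hadef, ← Real.rpow_mul hr.le, div_mul_cancel₀ _ hp0.ne']
  set A : ℝ := (a / p) ^ (p - 1) with hAdef
  set B : ℝ := s ^ (p - 1) with hBdef
  have hA : 0 < A := Real.rpow_pos_of_pos (by positivity) _
  have hB : 0 < B := Real.rpow_pos_of_pos hs0 _
  have hkey2 : A * a = B := by
    have hsr : s = r / p := by
      rw [hsdef, hrdef, div_div]
      ring_nf
    have h1 : A = a ^ (p-1) / p ^ (p-1) := by
      rw [hAdef, Real.div_rpow ha.le hp0.le]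
    have h2 : B = r ^ (p-1) / p ^ (p-1) := by
      rw [hBdef, hsr, Real.div_rpow hr.le hp0.le]
    have h3 : a ^ (p - 1) * a = a ^ p := by
      nth_rewrite 2 [← Real.rpow_one a]
      rw [← Real.rpow_add ha]
      ring_nf
    rw [h1, h2, ← hap, ← h3]
    ring
  have hpinv : p * p⁻¹ = 1 := mul_inv_cancel₀ hp0.ne'
  have hns' : p * (((n:ℝ) - 1) * s) = p - 1 := by
    rw [hsdef]; field_simp
  -- erase set
  have hi₀mem : i₀ ∈ (univ : Finset (Fin n)) := mem_univ i₀
  have hcard : (((univ : Finset (Fin n)).erase i₀).card : ℝ) = (n:ℝ) - 1 := by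
    rw [card_erase_of_mem hi₀mem, card_univ, Fintype.card_fin]
    have : 1 ≤ n := hn
    push_cast [Nat.cast_sub this]
    ring
  -- cost decomposition
  have cost_eq : ∀ y : Fin n → Fin 2 → ℝ,
      ∑ i, (∑ j, y i j * c i j) ^ p =
        (y i₀ 0 * (1 - a) + y i₀ 1 * a) ^ p +
          ∑ i ∈ (univ : Finset (Fin n)).erase i₀, (y i 1) ^ p := by
    intro y
    rw [← Finset.add_sum_erase _ _ hi₀mem]
    congr 1
    · rw [Fin.sum_univ_two, hc00, hc01]
    · apply Finset.sum_congr rfl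
      intro i hi
      have hi' : i ≠ i₀ := (Finset.mem_erase.mp hi).1
      rw [Fin.sum_univ_two, (hcj i hi').1, (hcj i hi').2]
      ring_nf
  -- the key lower bound
  have hB1 : ∀ y : Fin n → Fin 2 → ℝ, IsFracAlloc y →
      (((a/p) ^ p + ((n:ℝ) - 1) * s ^ p) + (p * A * (1 - a)) * y i₀ 0)
        + ((y i₀ 0 * (1 - a) + y i₀ 1 * a) ^ p
            - ((a/p) ^ p + p * A * ((y i₀ 0 * (1 - a) + y i₀ 1 * a) - a/p)))
        ≤ ∑ i, (∑ j, y i j * c i j) ^ p := by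
    intro y hy
    obtain ⟨hyb, hysum⟩ := hy
    rw [cost_eq y]
    have hE : ∑ i ∈ (univ : Finset (Fin n)).erase i₀, y i 1 = 1 - y i₀ 1 := by
      have h := hysum 1
      rw [← Finset.add_sum_erase _ _ hi₀mem] at h
      linarith
    have hsum : ((n:ℝ) - 1) * s ^ p + p * B * ((1 - y i₀ 1) - ((n:ℝ) - 1) * s)
        ≤ ∑ i ∈ (univ : Finset (Fin n)).erase i₀, (y i 1) ^ p := by
      have h1 : ∀ i ∈ (univ : Finset (Fin n)).erase i₀,
          s ^ p + p * B * (y i 1 - s) ≤ (y i 1) ^ p := fun i _ =>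
        rpow_tangent_le hp hs0.le (hyb i 1).1
      calc ((n:ℝ) - 1) * s ^ p + p * B * ((1 - y i₀ 1) - ((n:ℝ) - 1) * s)
          = ∑ i ∈ (univ : Finset (Fin n)).erase i₀, (s ^ p + p * B * (y i 1 - s)) := by
            rw [Finset.sum_add_distrib, Finset.sum_const, ← Finset.mul_sum,
              Finset.sum_sub_distrib, Finset.sum_const, nsmul_eq_mul, nsmul_eq_mul,
              hcard, hE]
        _ ≤ _ := Finset.sum_le_sum h1
    have hlin : p * A * ((y i₀ 0 * (1 - a) + y i₀ 1 * a) - a/p)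
        + p * B * ((1 - y i₀ 1) - ((n:ℝ) - 1) * s) = (p * A * (1 - a)) * y i₀ 0 := by
      linear_combination (p * y i₀ 1 - 1) * hkey2 - A * a * hpinv - B * hns'
    linarith
  -- the candidate optimum
  set xs : Fin n → Fin 2 → ℝ := fun i j =>
    if i = i₀ then (if j = 0 then 0 else 1/p)
    else (if j = 0 then 1/((n:ℝ) - 1) else s) with hxs
  have hxs_alloc : IsFracAlloc xs := by
    constructor
    · intro i j
      have hcases : xs i j = 0 ∨ xs i j = 1/p ∨ xs i j = 1/((n:ℝ) - 1) ∨ xs i j = s := by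
        by_cases hi : i = i₀ <;> by_cases hj : j = 0 <;> simp [hxs, hi, hj]
      rcases hcases with h | h | h | h <;> rw [h]
      · exact ⟨le_refl 0, by linarith⟩
      · constructor
        · positivity
        · rw [div_le_one hp0]; linarith
      · constructor
        · positivity
        · rw [div_le_one hm]; linarith
      · constructor
        · exact hs0.le
        · rw [hsdef, div_le_one (by positivity)]
          nlinarith [mul_le_mul_of_nonneg_left hm1 hp0.le]
    · intro j
      rw [← Finset.add_sum_erase _ _ hi₀mem]
      have hconst : ∀ i ∈ (univ : Finset (Fin n)).erase i₀,
          xs i j = (if j = 0 then 1/((n:ℝ) - 1) else s) := by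
        intro i hi
        simp [hxs, (Finset.mem_erase.mp hi).1]
      rw [Finset.sum_congr rfl hconst, Finset.sum_const, nsmul_eq_mul, hcard]
      by_cases hj : j = 0
      · simp only [hxs, hj, if_true, ite_true]
        field_simp
        norm_num
      · simp only [hxs, hj, if_false, ite_false, if_true, ite_true]
        rw [hsdef]
        field_simp
        ring
  -- value at the candidate optimum
  have hFxs : ∑ i, (∑ j, xs i j * c i j) ^ p = (a/p) ^ p + ((n:ℝ) - 1) * s ^ p := by
    rw [cost_eq xs]
    congr 1
    · have h0 : xs i₀ 0 = 0 := by simp [hxs]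
      have h1 : xs i₀ 1 = 1/p := by simp [hxs]
      rw [h0, h1]
      have : (0:ℝ) * (1 - a) + 1/p * a = a / p := by ring
      rw [this]
    · have hconst : ∀ i ∈ (univ : Finset (Fin n)).erase i₀,
          (xs i 1) ^ p = s ^ p := by
        intro i hi
        simp [hxs, (Finset.mem_erase.mp hi).1]
      rw [Finset.sum_congr rfl hconst, Finset.sum_const, nsmul_eq_mul, hcard]
  -- putting it together
  obtain ⟨hxb, hxsum⟩ := hx
  have hxmin := hmin xs hxs_alloc
  rw [hFxs] at hxmin
  have hmain := hB1 x ⟨hxb, hxsum⟩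
  set G : ℝ := x i₀ 0 * (1 - a) + x i₀ 1 * a with hGdef
  have hGnn : 0 ≤ G := by
    have h0 := (hxb i₀ 0).1
    have h1 := (hxb i₀ 1).1
    nlinarith
  have hap0 : (0:ℝ) ≤ a / p := (div_pos ha hp0).le
  have hslack : 0 ≤ G ^ p - ((a/p) ^ p + p * A * (G - a/p)) := by
    have h := rpow_tangent_le (s := a/p) (t := G) hp hap0 hGnn
    rw [← hAdef] at h
    linarith
  have hμ : 0 < p * A * (1 - a) := mul_pos (mul_pos hp0 hA) (by linarith)
  have h00nn := (hxb i₀ 0).1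
  have hle0 : p * A * (1 - a) * x i₀ 0 ≤ 0 := by linarith
  have hx00 : x i₀ 0 = 0 := by
    have hle : x i₀ 0 ≤ 0 := by
      by_contra hcon
      push_neg at hcon
      nlinarith [mul_pos hμ hcon]
    exact le_antisymm hle h00nn
  have hGeq : G = a / p := by
    by_contra hne
    have h := rpow_tangent_lt (s := a/p) (t := G) hp hap0 hGnn hne
    rw [← hAdef] at h
    rw [hx00] at hmain
    nlinarith
  have hx01 : x i₀ 1 = 1 / p := by
    rw [hGdef, hx00] at hGeq
    apply mul_right_cancel₀ ha.ne'
    linear_combination hGeq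
  refine ⟨hx01, ?_⟩
  rw [Fin.sum_univ_two, hc00, hc01, hx00, hx01]
  ring
end

section
/- Let n = 2 agents have normalized additive costs c̃₁, c̃₂ over a finite set M of indivisible chores, with c̃_i(M) = 1 for each i. Suppose an integral allocation (A₁, A₂) satisfies c̃₁(A₁) < c̃₂(A₁) < 1, and there is a chore t* ∈ A₂ with c̃₂(t*) > 0 such that c̃₂(A₂ \ {t*}) > c̃₂(A₁) (agent 2 envies agent 1 even after removing t*), and c̃₁(t*)/c̃₂(t*) ≤ c̃₁(A₂)/c̃₂(A₂). Then c̃₁(A₁ ∪ {t*})² + c̃₂(A₂ \ {t*})² < c̃₁(A₁)² + c̃₂(A₂)² and max{c̃₁(A₁ ∪ {t*}), c̃₂(A₂ \ {t*})} < max{c̃₁(A₁), c̃₂(A₂)}. -/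
lemma aux15 (a b u v : ℝ) (ha : 0 ≤ a) (hu : 0 ≤ u) (hv : 0 < v)
    (hab : a < b) (hb1 : b < 1) (he : b < 1 - b - v)
    (hr : u * (1 - b) ≤ v * (1 - a)) :
    (a + u) ^ 2 + (1 - b - v) ^ 2 < a ^ 2 + (1 - b) ^ 2 ∧
    max (a + u) (1 - b - v) < max a (1 - b) := by
  have hb0 : 0 < b := lt_of_le_of_lt ha hab
  have hb : 0 < 1 - b := by linarith
  have hau : a + u < 1 - b := by nlinarith [mul_pos hb0 (sub_pos.2 hab)]
  constructor
  · nlinarith [mul_nonneg (sub_nonneg.2 hr)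
        (by nlinarith : (0:ℝ) ≤ 2*a*(1-b) + v*(1-a) + u*(1-b)),
      mul_pos hv (pow_pos (sub_pos.2 hab) 2),
      mul_pos (mul_pos hv (by linarith : (0:ℝ) < 1 - 2*b - v))
        (by positivity : (0:ℝ) < (1-b)^2 + (1-a)^2),
      sq_nonneg (1-b), mul_pos hb hb]
  · have : max a (1 - b) = 1 - b := max_eq_right (by linarith)
    rw [this, max_lt_iff]
    exact ⟨hau, by linarith⟩

theorem stmt_15 {χ : Type*} [Fintype χ] [DecidableEq χ]
    (c1 c2 : χ → ℝ) (h1 : ∀ j, 0 ≤ c1 j) (h2 : ∀ j, 0 ≤ c2 j)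
    (hs1 : ∑ j, c1 j = 1) (hs2 : ∑ j, c2 j = 1)
    (A1 A2 : Finset χ) (hpart : A2 = A1ᶜ)
    (hlt : ∑ j ∈ A1, c1 j < ∑ j ∈ A1, c2 j) (hlt1 : ∑ j ∈ A1, c2 j < 1)
    (t : χ) (ht : t ∈ A2) (htpos : 0 < c2 t)
    (henvy : ∑ j ∈ A1, c2 j < ∑ j ∈ A2.erase t, c2 j)
    (hratio : c1 t / c2 t ≤ (∑ j ∈ A2, c1 j) / (∑ j ∈ A2, c2 j)) :
    (∑ j ∈ insert t A1, c1 j) ^ 2 + (∑ j ∈ A2.erase t, c2 j) ^ 2 <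
      (∑ j ∈ A1, c1 j) ^ 2 + (∑ j ∈ A2, c2 j) ^ 2 ∧
    max (∑ j ∈ insert t A1, c1 j) (∑ j ∈ A2.erase t, c2 j) <
      max (∑ j ∈ A1, c1 j) (∑ j ∈ A2, c2 j) := by
  set a := ∑ j ∈ A1, c1 j with ha'
  set b := ∑ j ∈ A1, c2 j with hb'
  have hA2c1 : ∑ j ∈ A2, c1 j = 1 - a := by
    rw [hpart, eq_sub_iff_add_eq, add_comm, ha', Finset.sum_add_sum_compl, hs1]
  have hA2c2 : ∑ j ∈ A2, c2 j = 1 - b := by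
    rw [hpart, eq_sub_iff_add_eq, add_comm, hb', Finset.sum_add_sum_compl, hs2]
  have htn1 : t ∉ A1 := by
    rw [hpart] at ht; exact Finset.mem_compl.1 ht
  have hins : ∑ j ∈ insert t A1, c1 j = a + c1 t := by
    rw [Finset.sum_insert htn1]; ring
  have herase : ∑ j ∈ A2.erase t, c2 j = 1 - b - c2 t := by
    rw [Finset.sum_erase_eq_sub ht, hA2c2]
  have ha0 : 0 ≤ a := Finset.sum_nonneg fun j _ => h1 j
  have hb1 : b < 1 := hlt1
  have he : b < 1 - b - c2 t := by rw [← herase]; exact henvy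
  have hbpos : (0:ℝ) < 1 - b := by linarith
  have hr : c1 t * (1 - b) ≤ c2 t * (1 - a) := by
    rw [hA2c1, hA2c2] at hratio
    rw [div_le_div_iff₀ htpos hbpos] at hratio
    linarith
  have := aux15 a b (c1 t) (c2 t) ha0 (h1 t) htpos hlt hb1 he hr
  rw [hins, herase, hA2c2]
  exact this
end

section
/- For n = 2 agents with additive normalized costs over indivisible chores (c̃_i(M) = 1 for each agent) and any p ≥ 2, every integral allocation (A₁, A₂) minimizing c̃₁(A₁)^p + c̃₂(A₂)^p over all partitions of M is EF1: for each agent i, either c̃_i(A_i) ≤ c̃_i(A_{-i}), or there exists a chore t ∈ A_i with c̃_i(A_i \ {t}) ≤ c̃_i(A_{-i}). -/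
open Finset NNReal

private lemma rpow_superadd {q x y : ℝ} (hq : 1 ≤ q) (hx : 0 ≤ x) (hy : 0 ≤ y) :
    x ^ q + y ^ q ≤ (x + y) ^ q := by
  lift x to ℝ≥0 using hx
  lift y to ℝ≥0 using hy
  have h := NNReal.add_rpow_le_rpow_add x y hq
  have h2 := NNReal.coe_le_coe.2 h
  push_cast [NNReal.coe_rpow] at h2
  exact_mod_cast h2

private lemma karamata_pair {q X Y Z W : ℝ} (hq : 1 ≤ q) (hX : 0 ≤ X) (hY : 0 ≤ Y)
    (hW : 0 ≤ W) (hXZ : X ≤ Z) (hYZ : Y ≤ Z) (h : X + Y < Z + W) :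
    X ^ q + Y ^ q < Z ^ q + W ^ q := by
  have hq0 : (0:ℝ) < q := lt_of_lt_of_le one_pos hq
  have hZ : 0 ≤ Z := hX.trans hXZ
  rcases le_or_gt (X + Y) Z with hc | hc
  · have h1 : X ^ q + Y ^ q ≤ (X + Y) ^ q := rpow_superadd hq hX hY
    rcases eq_or_lt_of_le hW with hW0 | hW0
    · have hXY : X + Y < Z := by rw [← hW0] at h; linarith
      have h2 : (X + Y) ^ q < Z ^ q := Real.rpow_lt_rpow (by positivity) hXY hq0
      have hWq : W ^ q = 0 := by rw [← hW0, Real.zero_rpow hq0.ne']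
      linarith
    · have h2 : (X + Y) ^ q ≤ Z ^ q := Real.rpow_le_rpow (by positivity) hc hq0.le
      have h3 : 0 < W ^ q := Real.rpow_pos_of_pos hW0 q
      linarith
  · set W' := X + Y - Z with hW'def
    have hW'0 : 0 ≤ W' := by simp only [hW'def]; linarith
    have hW'W : W' < W := by simp only [hW'def]; linarith
    have hW'X : W' ≤ X := by simp only [hW'def]; linarith
    have hW'Y : W' ≤ Y := by simp only [hW'def]; linarith
    have hW'Z : W' ≤ Z := hW'X.trans hXZ
    have hlast : W' ^ q < W ^ q := Real.rpow_lt_rpow hW'0 hW'W hq0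
    have key : X ^ q + Y ^ q ≤ Z ^ q + W' ^ q := by
      rcases eq_or_lt_of_le hW'Z with heq | hlt
      · have hXZ' : X = Z := le_antisymm hXZ (heq ▸ hW'X)
        have hYZ' : Y = Z := le_antisymm hYZ (heq ▸ hW'Y)
        rw [hXZ', hYZ', ← heq]
      · have hd0 : 0 < Z - W' := by linarith
        set lam := (X - W') / (Z - W') with hlam_def
        set mu := (Z - X) / (Z - W') with hmu_def
        have hlam : 0 ≤ lam := div_nonneg (by linarith) hd0.le
        have hmu : 0 ≤ mu := div_nonneg (by linarith) hd0.le
        have hsum1 : lam + mu = 1 := by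
          rw [hlam_def, hmu_def, ← add_div, div_eq_one_iff_eq hd0.ne']
          ring
        have hconv := convexOn_rpow hq
        have hfX := hconv.2 (Set.mem_Ici.2 hZ) (Set.mem_Ici.2 hW'0) hlam hmu hsum1
        have hfY := hconv.2 (Set.mem_Ici.2 hZ) (Set.mem_Ici.2 hW'0) hmu hlam
          (by linarith)
        simp only [smul_eq_mul] at hfX hfY
        have eX : lam * Z + mu * W' = X := by
          rw [hlam_def, hmu_def, div_mul_eq_mul_div, div_mul_eq_mul_div,
            ← add_div, div_eq_iff hd0.ne']
          ring
        have eY : mu * Z + lam * W' = Y := by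
          rw [hmu_def, hlam_def, div_mul_eq_mul_div, div_mul_eq_mul_div,
            ← add_div, div_eq_iff hd0.ne', hW'def]
          ring
        rw [eX] at hfX
        rw [eY] at hfY
        have e : lam * Z ^ q + mu * W' ^ q + (mu * Z ^ q + lam * W' ^ q)
            = Z ^ q + W' ^ q := by
          have h' : mu = 1 - lam := by linarith
          rw [h']; ring
        linarith
    linarith

set_option maxHeartbeats 2000000 in
private lemma side {χ : Type*} [Fintype χ] [DecidableEq χ]
    (c1 c2 : χ → ℝ) (h1 : ∀ j, 0 ≤ c1 j) (h2 : ∀ j, 0 ≤ c2 j)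
    (hs1 : ∑ j, c1 j = 1) (hs2 : ∑ j, c2 j = 1)
    (p : ℝ) (hp : 2 ≤ p)
    (A : Finset χ)
    (hmin : ∀ B : Finset χ,
      (∑ j ∈ A, c1 j) ^ p + (∑ j ∈ Aᶜ, c2 j) ^ p ≤
        (∑ j ∈ B, c1 j) ^ p + (∑ j ∈ Bᶜ, c2 j) ^ p) :
    (∑ j ∈ A, c1 j ≤ ∑ j ∈ Aᶜ, c1 j) ∨
      ∃ t ∈ A, ∑ j ∈ A.erase t, c1 j ≤ ∑ j ∈ Aᶜ, c1 j := by
  classical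
  have hp0 : (0:ℝ) < p := by linarith
  set a := ∑ j ∈ A, c1 j with ha_def
  set b := ∑ j ∈ Aᶜ, c2 j with hb_def
  have ha0 : 0 ≤ a := Finset.sum_nonneg fun i _ => h1 i
  have hb0 : 0 ≤ b := Finset.sum_nonneg fun i _ => h2 i
  have hac1 : ∑ j ∈ Aᶜ, c1 j = 1 - a := by
    have := Finset.sum_add_sum_compl A c1
    rw [hs1] at this; linarith
  have hac2 : ∑ j ∈ A, c2 j = 1 - b := by
    have := Finset.sum_add_sum_compl A c2
    rw [hs2] at this; linarith
  have ha1 : a ≤ 1 := by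
    have : 0 ≤ ∑ j ∈ Aᶜ, c1 j := Finset.sum_nonneg fun i _ => h1 i
    rw [hac1] at this; linarith
  have hb1 : b ≤ 1 := by
    have : 0 ≤ ∑ j ∈ A, c2 j := Finset.sum_nonneg fun i _ => h2 i
    rw [hac2] at this; linarith
  rw [hac1]
  by_contra hcon
  push_neg at hcon
  obtain ⟨hcon1, hcon2⟩ := hcon
  -- hcon1 : 1 - a < a ; hcon2 : ∀ t ∈ A, 1 - a < ∑ erase
  have ha2 : 1/2 < a := by linarith
  -- Step 1 : b ≤ 1 - a
  have hb : b ≤ 1 - a := by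
    by_contra hbI
    push_neg at hbI
    have hAc := hmin Aᶜ
    rw [compl_compl, hac1, hac2] at hAc
    have e1 : (1 - a) ^ p < b ^ p := Real.rpow_lt_rpow (by linarith) hbI hp0
    have e2 : (1 - b) ^ p < a ^ p := Real.rpow_lt_rpow (by linarith) (by linarith) hp0
    linarith
  -- Step 2 : select a chore t
  have hsel : ∃ t ∈ A, 0 < c1 t ∧ a * c2 t ≤ (1 - b) * c1 t := by
    have hex : ∃ t ∈ A, 0 < c1 t := by
      by_contra hno
      push_neg at hno
      have : a ≤ 0 := Finset.sum_nonpos fun i hi => hno i hi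
      linarith
    by_contra hno
    push_neg at hno
    set S := A.filter (fun t => 0 < c1 t) with hS_def
    have hSne : S.Nonempty := by
      obtain ⟨t, ht, htp⟩ := hex
      exact ⟨t, Finset.mem_filter.2 ⟨ht, htp⟩⟩
    have hsum1S : ∑ t ∈ S, c1 t = a := by
      rw [hS_def]
      exact Finset.sum_filter_of_ne fun x hx hne => lt_of_le_of_ne (h1 x) (Ne.symm hne)
    have hsub : S ⊆ A := by
      rw [hS_def]; exact Finset.filter_subset _ _
    have hsum2S : ∑ t ∈ S, c2 t ≤ 1 - b := by
      have := Finset.sum_le_sum_of_subset_of_nonneg hsub (fun i _ _ => h2 i)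
      rw [hac2] at this; exact this
    have hlt : ∑ t ∈ S, (1 - b) * c1 t < ∑ t ∈ S, a * c2 t := by
      refine Finset.sum_lt_sum_of_nonempty hSne fun i hi => ?_
      obtain ⟨hiA, hip⟩ := Finset.mem_filter.1 hi
      exact hno i hiA hip
    rw [← Finset.mul_sum, ← Finset.mul_sum, hsum1S] at hlt
    have : a * ∑ t ∈ S, c2 t ≤ a * (1 - b) := by
      exact mul_le_mul_of_nonneg_left hsum2S ha0
    nlinarith
  obtain ⟨t, htA, hx0, hxy⟩ := hsel
  set x := c1 t with hx_def
  set y := c2 t with hy_def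
  have hy0 : 0 ≤ y := h2 t
  -- x < 2a - 1
  have herase1 : ∑ j ∈ A.erase t, c1 j = a - x := by
    have := Finset.sum_erase_add A c1 htA
    rw [ha_def]; rw [← this]; ring
  have hxlt : x < 2*a - 1 := by
    have := hcon2 t htA
    rw [herase1] at this; linarith
  -- value of the swap
  have herase2 : ∑ j ∈ (A.erase t)ᶜ, c2 j = b + y := by
    have h' := Finset.sum_add_sum_compl (A.erase t) c2
    rw [hs2] at h'
    have h'' := Finset.sum_erase_add A c2 htA
    rw [hac2] at h''
    linarith
  have hswap := hmin (A.erase t)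
  rw [herase1, herase2] at hswap
  -- derived facts
  have hby : b + y ≤ a := by nlinarith
  have haxx : 0 ≤ a - x := by linarith
  have hc1b : 0 ≤ 1 - b := by linarith
  have hkey : (2*a-1)*((1-b)^2+a^2) ≤ 2*a^3 - 2*a*b*(1-b) := by
    nlinarith [sq_nonneg (a - (1 - b))]
  have hpos : 0 < (1-b)^2 + a^2 := by nlinarith
  have h5 : x*((1-b)^2+a^2) < 2*a^3 - 2*a*b*(1-b) :=
    lt_of_lt_of_le (mul_lt_mul_of_pos_right hxlt hpos) hkey
  have h6 : (a*y)^2 ≤ ((1-b)*x)^2 := by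
    have := pow_le_pow_left₀ (mul_nonneg ha0 hy0) hxy 2
    exact this
  have h7 : 2*a*b*(a*y) ≤ 2*a*b*((1-b)*x) :=
    mul_le_mul_of_nonneg_left hxy (by nlinarith [mul_nonneg ha0 hb0])
  have h8 : x*(x*((1-b)^2+a^2)) < x*(2*a^3 - 2*a*b*(1-b)) :=
    mul_lt_mul_of_pos_left h5 hx0
  have hgoal2 : a^2*((a-x)^2+(b+y)^2) < a^2*(a^2+b^2) := by nlinarith [h6, h7, h8]
  have ha2pos : 0 < a^2 := by nlinarith
  have hP2 : (a - x)^2 + (b + y)^2 < a^2 + b^2 := by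
    exact (mul_lt_mul_iff_right₀ ha2pos).mp hgoal2
  -- apply karamata with q = p/2
  have hq1 : 1 ≤ p / 2 := by linarith
  have hXZ' : (a-x)^2 ≤ a^2 := by nlinarith
  have hYZ' : (b+y)^2 ≤ a^2 := by nlinarith
  have hK := karamata_pair (q := p/2) (Z := a^2) hq1 (sq_nonneg (a - x))
    (sq_nonneg (b + y)) (sq_nonneg b) hXZ' hYZ' (by linarith)
  have hr : ∀ u : ℝ, 0 ≤ u → (u ^ 2) ^ (p/2) = u ^ p := by
    intro u hu
    rw [← Real.rpow_natCast u 2, ← Real.rpow_mul hu]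
    congr 1
    push_cast
    ring
  rw [hr _ haxx, hr _ (by linarith : (0:ℝ) ≤ b + y), hr _ ha0, hr _ hb0] at hK
  linarith

theorem stmt_16 {χ : Type*} [Fintype χ] [DecidableEq χ]
    (c1 c2 : χ → ℝ) (h1 : ∀ j, 0 ≤ c1 j) (h2 : ∀ j, 0 ≤ c2 j)
    (hs1 : ∑ j, c1 j = 1) (hs2 : ∑ j, c2 j = 1)
    (p : ℝ) (hp : 2 ≤ p)
    (A : Finset χ)
    (hmin : ∀ B : Finset χ,
      (∑ j ∈ A, c1 j) ^ p + (∑ j ∈ Aᶜ, c2 j) ^ p ≤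
        (∑ j ∈ B, c1 j) ^ p + (∑ j ∈ Bᶜ, c2 j) ^ p) :
    ((∑ j ∈ A, c1 j ≤ ∑ j ∈ Aᶜ, c1 j) ∨
      ∃ t ∈ A, ∑ j ∈ A.erase t, c1 j ≤ ∑ j ∈ Aᶜ, c1 j) ∧
    ((∑ j ∈ Aᶜ, c2 j ≤ ∑ j ∈ A, c2 j) ∨
      ∃ t ∈ Aᶜ, ∑ j ∈ Aᶜ.erase t, c2 j ≤ ∑ j ∈ A, c2 j) := by
  constructor
  · exact side c1 c2 h1 h2 hs1 hs2 p hp A hmin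
  · have hmin2 : ∀ B : Finset χ,
        (∑ j ∈ Aᶜ, c2 j) ^ p + (∑ j ∈ Aᶜᶜ, c1 j) ^ p ≤
          (∑ j ∈ B, c2 j) ^ p + (∑ j ∈ Bᶜ, c1 j) ^ p := by
      intro B
      have := hmin Bᶜ
      rw [compl_compl] at this ⊢
      linarith
    have := side c2 c1 h2 h1 hs2 hs1 p hp Aᶜ hmin2
    rw [compl_compl] at this
    exact this
end

section
/- Let 0 < ε < δ and 1 < p < 2 with δ < ε + (2ε+1)(1 - p/2), and set α = 1/(p-1), Δ = (δ-ε)/(1/2+ε). Then ((1/2+ε)^(p/(p-1)) - (1/2-δ)(1/2+δ)^(1/(p-1))) / ((1/2+δ)^(p/(p-1)) + (1/2+ε)^(p/(p-1))) < ε/(1/2+ε). -/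
set_option maxHeartbeats 1000000


theorem stmt_17 (ε δ p : ℝ) (hε : 0 < ε) (hεδ : ε < δ) (hp1 : 1 < p) (hp2 : p < 2)
    (hδ : δ < ε + (2 * ε + 1) * (1 - p / 2)) :
    ((1 / 2 + ε) ^ (p / (p - 1)) - (1 / 2 - δ) * (1 / 2 + δ) ^ (1 / (p - 1))) /
        ((1 / 2 + δ) ^ (p / (p - 1)) + (1 / 2 + ε) ^ (p / (p - 1))) <
      ε / (1 / 2 + ε) := by
  have hp' : (0:ℝ) < p - 1 := by linarith
  have ha : (0:ℝ) < 1/2 + ε := by linarith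
  have hb : (0:ℝ) < 1/2 + δ := by linarith
  set α : ℝ := 1 / (p - 1) with hαdef
  have hα : 1 < α := by
    rw [hαdef, lt_div_iff₀ hp']; linarith
  set Δ : ℝ := (δ - ε) / (1/2 + ε) with hΔdef
  have hΔpos : 0 < Δ := div_pos (by linarith) ha
  have hΔ2 : Δ < 2 - p := by
    rw [hΔdef, div_lt_iff₀ ha]; nlinarith
  have hΔ1 : Δ < 1 := by linarith
  have hbe : (1/2 + δ) = (1/2 + ε) * (1 + Δ) := by
    rw [hΔdef]; field_simp; ring
  have hpα : p / (p - 1) = 1 + α := by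
    rw [hαdef]; field_simp; ring
  have hA : 0 < (1/2 + ε) ^ α := Real.rpow_pos_of_pos ha α
  have hB : 0 < (1/2 + δ) ^ α := Real.rpow_pos_of_pos hb α
  have hra : (1/2 + ε) ^ (p / (p-1)) = (1/2 + ε) * (1/2 + ε) ^ α := by
    rw [hpα, Real.rpow_add ha, Real.rpow_one]
  have hrb : (1/2 + δ) ^ (p / (p-1)) = (1/2 + δ) * (1/2 + δ) ^ α := by
    rw [hpα, Real.rpow_add hb, Real.rpow_one]
  have hbern : 1 + α * Δ ≤ (1 + Δ) ^ α :=
    one_add_mul_self_le_rpow_one_add (by linarith) hα.le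
  have hsplit : (1/2 + δ) ^ α = (1/2 + ε) ^ α * (1 + Δ) ^ α := by
    rw [hbe, Real.mul_rpow ha.le (by linarith)]
  -- key inequality
  have hα2 : α - 1 = α * (2 - p) := by
    rw [hαdef]; field_simp; ring
  have hαp : (0:ℝ) < α := by linarith
  have h2pΔ : 0 < 2 - p - Δ := by linarith
  have hcoef : (1:ℝ) < (1 - Δ) * (1 + α * Δ) := by
    nlinarith [mul_pos hΔpos (mul_pos hαp h2pΔ)]
  have key : (1/2 + ε) * (1/2 + ε) ^ α < (1/2 + 2*ε - δ) * (1/2 + δ) ^ α := by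
    have hc : (1/2 + 2*ε - δ) = (1/2 + ε) * (1 - Δ) := by
      rw [hΔdef]; field_simp; ring
    rw [hc, hsplit]
    have h0 : (0:ℝ) < (1/2 + ε) * (1 - Δ) * (1/2 + ε) ^ α := by
      have h1Δ : (0:ℝ) < 1 - Δ := by linarith
      positivity
    have hstep := mul_lt_mul_of_pos_left hcoef (mul_pos ha hA)
    calc (1/2 + ε) * (1/2 + ε) ^ α
        < ((1/2 + ε) * (1 - Δ) * (1/2 + ε) ^ α) * (1 + α * Δ) := by nlinarith [hstep]
      _ ≤ ((1/2 + ε) * (1 - Δ) * (1/2 + ε) ^ α) * ((1 + Δ) ^ α) :=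
          mul_le_mul_of_nonneg_left hbern h0.le
      _ = (1/2 + ε) * (1 - Δ) * ((1/2 + ε) ^ α * (1 + Δ) ^ α) := by ring
  have hD : 0 < (1/2 + δ) ^ (p / (p-1)) + (1/2 + ε) ^ (p / (p-1)) := by
    rw [hra, hrb]; positivity
  rw [div_lt_div_iff₀ hD ha, hra, hrb]
  nlinarith [key, hA, hB]
end

section
/- Let c̃₁, c̃₂ be normalized additive costs of two agents over a partition (A₁, A₂) of chores M with c̃_i(M) = 1, and suppose c̃₁(A₁) = c̃₂(A₁). Let t* ∈ A₂ with c̃₂(t*) > 0, c̃₁(t*) ≤ c̃₂(t*), and c̃₂(A₂ \ {t*}) > c̃₂(A₁). Then c̃₁(A₁ ∪ {t*})² + c̃₂(A₂ \ {t*})² < c̃₁(A₁)² + c̃₂(A₂)² and c̃₁(A₁ ∪ {t*}) < c̃₂(A₂). -/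
theorem stmt_19 {χ : Type*} [Fintype χ] [DecidableEq χ]
    (c1 c2 : χ → ℝ) (h1 : ∀ j, 0 ≤ c1 j) (h2 : ∀ j, 0 ≤ c2 j)
    (hs1 : ∑ j, c1 j = 1) (hs2 : ∑ j, c2 j = 1)
    (A1 A2 : Finset χ) (hpart : A2 = A1ᶜ)
    (heq : ∑ j ∈ A1, c1 j = ∑ j ∈ A1, c2 j)
    (t : χ) (ht : t ∈ A2) (htpos : 0 < c2 t) (htle : c1 t ≤ c2 t)
    (henvy : ∑ j ∈ A1, c2 j < ∑ j ∈ A2.erase t, c2 j) :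
    (∑ j ∈ insert t A1, c1 j) ^ 2 + (∑ j ∈ A2.erase t, c2 j) ^ 2 <
      (∑ j ∈ A1, c1 j) ^ 2 + (∑ j ∈ A2, c2 j) ^ 2 ∧
    ∑ j ∈ insert t A1, c1 j < ∑ j ∈ A2, c2 j := by
  have htA1 : t ∉ A1 := by
    subst hpart; simpa using ht
  have hA2c2 : ∑ j ∈ A2, c2 j = 1 - ∑ j ∈ A1, c2 j := by
    subst hpart
    have := Finset.sum_add_sum_compl A1 c2
    linarith
  have herase : ∑ j ∈ A2.erase t, c2 j = ∑ j ∈ A2, c2 j - c2 t := by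
    rw [Finset.sum_erase_eq_sub ht]
  have hins : ∑ j ∈ insert t A1, c1 j = c1 t + ∑ j ∈ A1, c1 j :=
    Finset.sum_insert htA1
  have ha0 : 0 ≤ ∑ j ∈ A1, c1 j := Finset.sum_nonneg fun j _ => h1 j
  have hc1t : 0 ≤ c1 t := h1 t
  rw [herase, hA2c2] at henvy
  rw [hins, herase, hA2c2]
  constructor
  · nlinarith [sq_nonneg (c2 t - c1 t)]
  · linarith
end
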